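/- Let G be a plane graph with positive integral edge weights and girth(G) ≤ B. Partition the nodes of G by outerplane depth, and for each integer i ≥ 0, let G_i be the subgraph induced by nodes with outerplane depth j satisfying B·i < j ≤ B·(i+2). Then girth(G) equals the minimum of girth(G_i) over all i ≥ 0, i.e., some minimum-weight simple cycle of G lies entirely in a single slab G_i. -/
import Mathlib


open SimpleGraph

variable {V : Type*}

/-- The weight of a walk: the sum of the weights of its edges. -/
def walkWeight {G : SimpleGraph V} (w : Sym2 V → ℕ) {u v : V} (p : G.Walk u v) : ℕ :=
  (p.edges.map w).sum

/-- Abstract model of the outerplane-depth function of a plane graph `G`: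
`depth v` is the positive integer such that `v` becomes external after peeling
`depth v - 1` levels of external nodes; peeling exposes the neighbors of external
nodes, so the depths of adjacent nodes differ by at most one. -/
structure OuterplaneDepth (G : SimpleGraph V) where
  depth : V → ℕ
  one_le : ∀ v : V, 1 ≤ depth v
  adj_le : ∀ ⦃u v : V⦄, G.Adj u v → depth u ≤ depth v + 1

/-- The girth of the subgraph of `G` induced by `A`: the minimum weight of a simple
cycle whose support lies in `A` (`⊤` if there is none). -/
noncomputable def girthIn (G : SimpleGraph V) (w : Sym2 V → ℕ) (A : Set V) : ℕ∞ :=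
  sInf {n : ℕ∞ | ∃ (x : V) (p : G.Walk x x),
    p.IsCycle ∧ {a | a ∈ p.support} ⊆ A ∧ n = (walkWeight w p : ℕ∞)}

/-- The girth of `G`. -/
noncomputable def wgirth (G : SimpleGraph V) (w : Sym2 V → ℕ) : ℕ∞ :=
  girthIn G w Set.univ

/-- Depths are Lipschitz along walks. -/
lemma depth_le_of_walk {G : SimpleGraph V} (D : OuterplaneDepth G) :
    ∀ {u v : V} (p : G.Walk u v), D.depth v ≤ D.depth u + p.length := by
  intro u v p
  induction p with
  | nil => simp
  | cons h q ih =>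
    have h1 : D.depth _ ≤ D.depth _ + 1 := D.adj_le h.symm
    simp only [SimpleGraph.Walk.length_cons]
    omega

/-- Between any two vertices on a closed walk there is a walk of length at most
the length of the closed walk. -/
lemma exists_walk_between {G : SimpleGraph V} {x a b : V} (p : G.Walk x x)
    (ha : a ∈ p.support) (hb : b ∈ p.support) :
    ∃ r : G.Walk a b, r.length ≤ p.length := by
  classical
  have hspec := p.take_spec ha
  have hlen : (p.takeUntil a ha).length + (p.dropUntil a ha).length = p.length := by
    rw [← SimpleGraph.Walk.length_append, hspec]
  have hb' : b ∈ ((p.takeUntil a ha).append (p.dropUntil a ha)).support := by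
    rw [hspec]; exact hb
  rw [SimpleGraph.Walk.mem_support_append_iff] at hb'
  rcases hb' with hb1 | hb2
  · refine ⟨(p.dropUntil a ha).append ((p.takeUntil a ha).takeUntil b hb1), ?_⟩
    rw [SimpleGraph.Walk.length_append]
    have := SimpleGraph.Walk.length_takeUntil_le (p.takeUntil a ha) hb1
    omega
  · refine ⟨(p.dropUntil a ha).takeUntil b hb2, ?_⟩
    have := SimpleGraph.Walk.length_takeUntil_le (p.dropUntil a ha) hb2
    omega

lemma length_le_sum_map {w : Sym2 V → ℕ} :
    ∀ (l : List (Sym2 V)), (∀ e ∈ l, 1 ≤ w e) → l.length ≤ (l.map w).sum := by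
  intro l hl
  induction l with
  | nil => simp
  | cons e t ih =>
    have h1 := hl e (by simp)
    have h2 := ih (fun e' he' => hl e' (by simp [he']))
    simp only [List.map_cons, List.sum_cons, List.length_cons]
    omega

/-- Let `G` be a plane graph with positive integral edge weights
and `girth(G) ≤ B`.  For `i ≥ 0` let `G_i` be the subgraph induced by the nodes
whose outerplane depth `j` satisfies `B·i < j ≤ B·(i+2)`.  Then
`girth(G) = min_i girth(G_i)`: some minimum-weight simple cycle of `G` lies entirely
in a single slab `G_i`. -/
theorem wgirth_eq_min_slab {V : Type*} (G : SimpleGraph V) (w : Sym2 V → ℕ)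
    (hw : ∀ e ∈ G.edgeSet, 1 ≤ w e)
    (D : OuterplaneDepth G) (B : ℕ) (hB : wgirth G w ≤ (B : ℕ∞)) :
    wgirth G w =
      ⨅ i : ℕ, girthIn G w {v : V | B * i < D.depth v ∧ D.depth v ≤ B * (i + 2)} := by
  classical
  refine le_antisymm (le_iInf fun i => sInf_le_sInf ?_) ?_
  · rintro n ⟨x, p, hc, hsub, hn⟩
    exact ⟨x, p, hc, Set.subset_univ _, hn⟩
  · -- obtain a minimum-weight cycle
    have hne : {n : ℕ∞ | ∃ (x : V) (p : G.Walk x x),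
        p.IsCycle ∧ {a | a ∈ p.support} ⊆ Set.univ ∧ n = (walkWeight w p : ℕ∞)}.Nonempty := by
      by_contra h
      rw [Set.not_nonempty_iff_eq_empty] at h
      have : wgirth G w = ⊤ := by
        rw [wgirth, girthIn, h, sInf_empty]
      rw [this, top_le_iff] at hB
      exact (WithTop.coe_ne_top) hB
    have hmem := csInf_mem hne
    obtain ⟨x, p, hc, -, hWeq⟩ := hmem
    have hgirth : wgirth G w = (walkWeight w p : ℕ∞) := hWeq
    have hWB : walkWeight w p ≤ B := by
      rw [hgirth] at hB
      exact_mod_cast hB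
    -- the length of p is at most its weight
    have hLW : p.length ≤ walkWeight w p := by
      have := length_le_sum_map (w := w) p.edges (fun e he => hw e (p.edges_subset_edgeSet he))
      rwa [SimpleGraph.Walk.length_edges] at this
    have hLB : p.length ≤ B := le_trans hLW hWB
    have hB0 : 0 < B := lt_of_lt_of_le (by omega : 0 < 3) (le_trans hc.three_le_length hLB)
    -- pick a vertex of minimal depth on p
    obtain ⟨a0, ha0, hmin⟩ :=
      p.support.toFinset.exists_min_image D.depth ⟨x, by simp⟩
    rw [List.mem_toFinset] at ha0
    set m := D.depth a0 with hm
    have hm1 : 1 ≤ m := D.one_le a0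
    set i := (m - 1) / B with hi
    -- every vertex of p lies in slab i
    have hslab : {a | a ∈ p.support} ⊆
        {v : V | B * i < D.depth v ∧ D.depth v ≤ B * (i + 2)} := by
      intro b hb
      have hbmem : b ∈ p.support := hb
      have hminb : m ≤ D.depth b := hmin b (by rwa [List.mem_toFinset])
      obtain ⟨r, hr⟩ := exists_walk_between p ha0 hbmem
      have hlip : D.depth b ≤ m + r.length := depth_le_of_walk D r
      have hdb : D.depth b ≤ m + B := by omega
      constructor
      · -- B * i < depth b
        have h1 : B * i ≤ m - 1 := Nat.mul_div_le (m - 1) B |>.trans_eq rfl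
        omega
      · -- depth b ≤ B * (i + 2)
        have h2 : m - 1 < (i + 1) * B := by
          have : (m - 1) / B < i + 1 := Nat.lt_succ_self i
          exact (Nat.div_lt_iff_lt_mul hB0).mp this
        have h3 : B * (i + 2) = (i + 1) * B + B := by ring
        omega
    calc ⨅ i : ℕ, girthIn G w {v : V | B * i < D.depth v ∧ D.depth v ≤ B * (i + 2)}
        ≤ girthIn G w {v : V | B * i < D.depth v ∧ D.depth v ≤ B * (i + 2)} := iInf_le _ i
      _ ≤ (walkWeight w p : ℕ∞) := sInf_le ⟨x, p, hc, hslab, rfl⟩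
      _ = wgirth G w := hgirth.symm
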